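/- arXiv:2305.11274 — 3 statements merged into one kernel-verified Lean document; each statement's English description precedes it below -/
import Mathlib

section
/- In a free group, if an element a is conjugate to the commutator [b,c] of some elements b, c, and b is conjugate to the commutator [a,d] of a and some element d, then a = b = 1. -/
namespace Stmt1Aux

variable {ι : Type*} [DecidableEq ι]

/-- Coefficient functions of noncommutative power series: words ↦ ℤ. -/
abbrev M (ι : Type*) := List ι → ℤ

def Sfun (i : ι) (p : M ι) : M ι
  | [] => 0
  | j :: t => if j = i then p t else 0

@[simp] lemma Sfun_nil (i : ι) (p : M ι) : Sfun i p [] = 0 := rfl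
@[simp] lemma Sfun_cons (i j : ι) (p : M ι) (t : List ι) :
    Sfun i p (j :: t) = if j = i then p t else 0 := rfl

/-- Left multiplication by `X i`. -/
def S (i : ι) : Module.End ℤ (M ι) where
  toFun := Sfun i
  map_add' p q := by
    funext w; cases w with
    | nil => simp
    | cons j t => simp only [Sfun_cons, Pi.add_apply]; split <;> simp
  map_smul' c p := by
    funext w; cases w with
    | nil => simp
    | cons j t => simp only [Sfun_cons, Pi.smul_apply, RingHom.id_apply, smul_eq_mul]
                  split <;> simp

@[simp] lemma S_apply (i : ι) (p : M ι) : S i p = Sfun i p := rfl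

def Vfun (i : ι) (p : M ι) : M ι := fun w =>
  ∑ k ∈ Finset.range (w.length + 1),
    (if w.take k = List.replicate k i then (-1 : ℤ) ^ k else 0) * p (w.drop k)

@[simp] lemma Vfun_nil (i : ι) (p : M ι) : Vfun i p [] = p [] := by
  simp [Vfun]

lemma Vfun_cons (i j : ι) (p : M ι) (t : List ι) :
    Vfun i p (j :: t) = p (j :: t) - (if j = i then Vfun i p t else 0) := by
  unfold Vfun
  rw [List.length_cons, Finset.sum_range_succ']
  simp only [List.take_succ_cons, List.drop_succ_cons, List.take_zero, List.drop_zero,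
    List.replicate_succ, List.replicate_zero, if_pos rfl, pow_zero, one_mul]
  by_cases h : j = i
  · subst h
    simp only [if_pos rfl, if_true, one_mul, List.cons.injEq, true_and]
    rw [add_comm, sub_eq_add_neg]
    congr 1
    rw [← Finset.sum_neg_distrib]
    apply Finset.sum_congr rfl
    intro k _
    by_cases hk : t.take k = List.replicate k j <;> simp [hk, pow_succ]
  · have h2 : ∀ k, ¬(j :: t.take k = List.replicate (k + 1) i) := by
      intro k hk
      rw [List.replicate_succ] at hk
      exact h (List.head_eq_of_cons_eq hk)
    simp only [if_neg h, List.cons.injEq]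
    rw [Finset.sum_eq_zero, zero_add, sub_zero, if_pos trivial, one_mul]
    intro k _
    have := h2 k
    rw [List.replicate_succ] at this
    simp only [List.cons.injEq] at this
    rw [if_neg this, zero_mul]

/-- Left multiplication by `(1 + X i)⁻¹ = 1 - X i + X i² - ⋯`. -/
def V (i : ι) : Module.End ℤ (M ι) where
  toFun := Vfun i
  map_add' p q := by
    funext w
    simp only [Vfun, Pi.add_apply, mul_add, Finset.sum_add_distrib]
  map_smul' c p := by
    funext w
    simp only [Vfun, Pi.smul_apply, RingHom.id_apply, smul_eq_mul, Finset.mul_sum]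
    apply Finset.sum_congr rfl
    intro k _; ring

@[simp] lemma V_apply (i : ι) (p : M ι) : V i p = Vfun i p := rfl

lemma U_mul_V (i : ι) : (1 + S i) * V i = 1 := by
  apply LinearMap.ext; intro p
  funext w
  cases w with
  | nil => simp [Module.End.mul_apply]
  | cons j t =>
      simp only [Module.End.mul_apply, LinearMap.add_apply, Module.End.one_apply,
        Pi.add_apply, S_apply, V_apply, Sfun_cons, Vfun_cons]
      split <;> simp

lemma V_mul_U (i : ι) : V i * (1 + S i) = 1 := by
  apply LinearMap.ext; intro p
  funext w
  induction w with
  | nil => simp [Module.End.mul_apply]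
  | cons j t ih =>
      simp only [Module.End.mul_apply, Module.End.one_apply, V_apply, LinearMap.add_apply,
        Pi.add_apply, S_apply] at ih ⊢
      rw [Vfun_cons]
      simp only [Pi.add_apply, Sfun_cons, ih]
      split <;> simp [ih]

/-- The unit `1 + X i` of the endomorphism ring. -/
noncomputable def u (i : ι) : (Module.End ℤ (M ι))ˣ :=
  ⟨1 + S i, V i, U_mul_V i, V_mul_U i⟩

@[simp] lemma u_val (i : ι) : ((u i : (Module.End ℤ (M ι))ˣ) : Module.End ℤ (M ι)) = 1 + S i := rfl
@[simp] lemma u_inv (i : ι) : (((u i)⁻¹ : (Module.End ℤ (M ι))ˣ) : Module.End ℤ (M ι)) = V i := rfl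
/-- Convolution: multiplication of power series (as coefficient functions). -/
def mulop (f p : M ι) : M ι := fun w =>
  ∑ k ∈ Finset.range (w.length + 1), f (w.take k) * p (w.drop k)

/-- The power series `1`. -/
def δ : M ι := fun w => if w = [] then 1 else 0

@[simp] lemma δ_nil : (δ : M ι) [] = 1 := rfl
lemma δ_ne {w : List ι} (h : w ≠ []) : (δ : M ι) w = 0 := if_neg h

lemma mulop_delta_left (p : M ι) : mulop δ p = p := by
  funext w
  rw [mulop, Finset.sum_eq_single 0]
  · simp [δ]
  · intro k hk hk0
    rw [δ_ne, zero_mul]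
    intro h
    rcases List.take_eq_nil_iff.mp h with h | h
    · exact hk0 h
    · subst h; simp at hk; omega
  · simp

lemma Sfun_mulop (i : ι) (f p : M ι) : Sfun i (mulop f p) = mulop (Sfun i f) p := by
  funext w
  cases w with
  | nil => simp [mulop]
  | cons j t =>
      rw [Sfun_cons]
      simp only [mulop, List.length_cons]
      rw [Finset.sum_range_succ' (fun k => Sfun i f (List.take k (j :: t)) * p (List.drop k (j :: t)))]
      simp only [List.take_succ_cons, List.drop_succ_cons, List.take_zero, List.drop_zero,
        Sfun_cons, Sfun_nil, zero_mul, add_zero]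
      split
      · rfl
      · rw [Finset.sum_eq_zero]
        intro k _
        simp_all
omit [DecidableEq ι] in
lemma mulop_add_left (f g p : M ι) : mulop (f + g) p = mulop f p + mulop g p := by
  funext w
  simp [mulop, add_mul, Finset.sum_add_distrib]

lemma U_mulop (i : ι) (f p : M ι) :
    (1 + S i) (mulop f p) = mulop ((1 + S i) f) p := by
  simp only [LinearMap.add_apply, Module.End.one_apply, S_apply]
  rw [Sfun_mulop, mulop_add_left]

lemma V_mulop (i : ι) (f p : M ι) :
    V i (mulop f p) = mulop (V i f) p := by
  have h1 : (1 + S i) (mulop (V i f) p) = mulop f p := by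
    rw [U_mulop]
    rw [← Module.End.mul_apply, U_mul_V, Module.End.one_apply]
  have h2 : V i ((1 + S i) (mulop (V i f) p)) = mulop (V i f) p := by
    rw [← Module.End.mul_apply, V_mul_U, Module.End.one_apply]
  rw [← h1, h2]

lemma zpow_u_apply (i : ι) (e : ℤ) (p : M ι) :
    ((u i ^ e : (Module.End ℤ (M ι))ˣ) : Module.End ℤ (M ι)) p
      = mulop (((u i ^ e : (Module.End ℤ (M ι))ˣ) : Module.End ℤ (M ι)) δ) p := by
  induction e using Int.induction_on with
  | zero => simp [mulop_delta_left]
  | succ n ih =>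
      have hs : (u i) ^ ((n : ℤ) + 1) = u i * (u i) ^ (n : ℤ) := by
        rw [add_comm, zpow_one_add]
      rw [hs]
      simp only [Units.val_mul, Module.End.mul_apply, u_val]
      rw [ih, U_mulop]
  | pred n ih =>
      have hs : (u i) ^ (-(n : ℤ) - 1) = (u i)⁻¹ * (u i) ^ (-(n : ℤ)) := by
        have : (-(n : ℤ) - 1) = (-1) + (-(n : ℤ)) := by ring
        rw [this, zpow_add, zpow_neg_one]
      rw [hs]
      simp only [Units.val_mul, Module.End.mul_apply, u_inv]
      rw [ih, V_mulop]
/-- A series is supported on powers of the letter `i`. -/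
def PowSupp (i : ι) (q : M ι) : Prop :=
  ∀ w : List ι, q w ≠ 0 → w = List.replicate w.length i

/-- The series `(1 + X i) ^ e`. -/
noncomputable def q (i : ι) (e : ℤ) : M ι :=
  ((u i ^ e : (Module.End ℤ (M ι))ˣ) : Module.End ℤ (M ι)) δ

lemma q_spec (i : ι) (e : ℤ) :
    PowSupp i (q i e) ∧ q i e [] = 1 ∧ q i e [i] = e := by
  induction e using Int.induction_on with
  | zero =>
      refine ⟨fun w hw => ?_, by simp [q], by simp [q, δ_ne]⟩
      by_contra h
      exact hw (by simpa [q] using δ_ne (by rintro rfl; exact h rfl))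
  | succ n ih =>
      obtain ⟨hsupp, h0, h1⟩ := ih
      have hs : (u i) ^ ((n : ℤ) + 1) = u i * (u i) ^ (n : ℤ) := by
        rw [add_comm, zpow_one_add]
      have key : ∀ w, q i ((n : ℤ) + 1) w = q i (n : ℤ) w + Sfun i (q i (n : ℤ)) w := by
        intro w
        simp only [q, hs, Units.val_mul, Module.End.mul_apply, u_val, LinearMap.add_apply,
          Module.End.one_apply, Pi.add_apply, S_apply]
      refine ⟨fun w hw => ?_, ?_, ?_⟩
      · rw [key] at hw
        rcases (by by_contra h; push_neg at h; simp [h.1, h.2] at hw :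
            q i (n : ℤ) w ≠ 0 ∨ Sfun i (q i (n : ℤ)) w ≠ 0) with h | h
        · exact hsupp w h
        · cases w with
          | nil => simp at h
          | cons j t =>
              rw [Sfun_cons] at h
              by_cases hj : j = i
              · subst hj
                have := hsupp t (by simpa using h)
                rw [List.length_cons, List.replicate_succ]
                exact congrArg (j :: ·) this
              · simp [hj] at h
      · rw [key, h0]; simp
      · rw [key, h1, Sfun_cons, if_pos rfl, h0]
  | pred n ih =>
      obtain ⟨hsupp, h0, h1⟩ := ih
      have hs : (u i) ^ (-(n : ℤ) - 1) = (u i)⁻¹ * (u i) ^ (-(n : ℤ)) := by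
        have : (-(n : ℤ) - 1) = (-1) + (-(n : ℤ)) := by ring
        rw [this, zpow_add, zpow_neg_one]
      have key : ∀ w, q i (-(n : ℤ) - 1) w = Vfun i (q i (-(n : ℤ))) w := by
        intro w
        simp only [q, hs, Units.val_mul, Module.End.mul_apply, u_inv, V_apply]
      refine ⟨fun w hw => ?_, ?_, ?_⟩
      · rw [key] at hw
        clear key
        induction w with
        | nil => rfl
        | cons j t iht =>
            rw [Vfun_cons] at hw
            rcases (by by_contra h; push_neg at h; simp [h.1, h.2] at hw :
                q i (-(n : ℤ)) (j :: t) ≠ 0 ∨ (if j = i then Vfun i (q i (-(n : ℤ))) t else 0) ≠ 0)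
              with h | h
            · exact hsupp _ h
            · by_cases hj : j = i
              · subst hj
                have := iht (by simpa using h)
                rw [List.length_cons, List.replicate_succ]
                exact congrArg (j :: ·) this
              · simp [hj] at h
      · rw [key, Vfun_nil, h0]
      · rw [key, Vfun_cons, Vfun_nil, if_pos rfl, h0, h1]

/-- Iterated convolution product of a list of series against `δ`. -/
def conv : List (ι × M ι) → M ι
  | [] => δ
  | jf :: B => mulop jf.2 (conv B)

/-- Vanishing lemma: the product vanishes on words with a spurious prefix. -/
lemma conv_vanish : ∀ (B : List (ι × M ι)), (∀ x ∈ B, PowSupp x.1 x.2) →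
    ∀ A : List ι, A ≠ [] → List.Chain' (· ≠ ·) (A ++ B.map Prod.fst) →
    conv B (A ++ B.map Prod.fst) = 0
  | [], _, A, hA, _ => by
      simpa [conv] using δ_ne (by simpa using hA)
  | (j, f) :: B, hsupp, A, hA, hchain => by
      rw [conv, mulop]
      dsimp only
      apply Finset.sum_eq_zero
      intro k hk
      rw [Finset.mem_range] at hk
      rcases le_or_gt k A.length with hkA | hkA
      · -- the right factor vanishes by induction
        have hd : ((A ++ ((j, f) :: B).map Prod.fst).drop k)
            = (A.drop k ++ [j]) ++ B.map Prod.fst := by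
          rw [List.map_cons, List.drop_append_of_le_length hkA]
          simp
        rw [hd, conv_vanish B (fun x hx => hsupp x (List.mem_cons_of_mem _ hx)) _ (by simp)
            (by rw [← hd]; exact hchain.suffix (List.drop_suffix _ _))]
        ring
      · -- the left factor vanishes since `A` would consist of `j`s
        have hfz : f ((A ++ ((j, f) :: B).map Prod.fst).take k) = 0 := by
          by_contra hf
          have hrep := hsupp (j, f) (List.mem_cons_self) _ hf
          set W := A ++ ((j, f) :: B).map Prod.fst with hW
          -- A is a prefix of `W.take k`, hence consists of `j`s
          have hAtake : A = (W.take k).take A.length := by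
            rw [List.take_take, inf_of_le_left (le_of_lt hkA), hW,
              List.take_append_of_le_length (le_refl _), List.take_length]
          have hlenW : (List.take k W).length = k := by
            rw [List.length_take]
            exact Nat.min_eq_left (Nat.lt_succ_iff.mp hk)
          have hArep : A = List.replicate A.length j := by
            conv_lhs => rw [hAtake, hrep, List.take_replicate]
            rw [hlenW, inf_of_le_left (le_of_lt hkA)]
          -- but the chain condition says the last letter of A is not j
          obtain ⟨x, hx⟩ : ∃ x, A.getLast? = some x := ⟨_, List.getLast?_eq_getLast hA⟩
          have hxmem : x ∈ A := by
            obtain ⟨h', rfl⟩ := List.mem_getLast?_eq_getLast hx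
            exact List.getLast_mem h'
          have hxne : x ≠ j := by
            have := (List.isChain_append.mp hchain).2.2
            exact this x hx j (by simp)
          rw [hArep] at hxmem
          exact hxne (List.eq_of_mem_replicate hxmem)
        rw [hfz]; ring

/-- Main coefficient computation. -/
lemma conv_coeff : ∀ (B : List (ι × M ι)),
    (∀ x ∈ B, PowSupp x.1 x.2 ∧ x.2 [] = 1) →
    List.Chain' (fun x y => x.1 ≠ y.1) B →
    conv B (B.map Prod.fst) = (B.map (fun x => x.2 [x.1])).prod
  | [], _, _ => by simp [conv]
  | (j, f) :: B, hyp, hchain => by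
      rw [conv, mulop]
      dsimp only
      have hchain' : List.Chain' (· ≠ ·) (((j, f) :: B).map Prod.fst) :=
        (List.isChain_map _).mpr hchain
      rw [Finset.sum_eq_single 1]
      · rw [List.map_cons, List.take_succ_cons, List.take_zero, List.drop_succ_cons,
          List.drop_zero, conv_coeff B (fun x hx => hyp x (List.mem_cons_of_mem _ hx))
            hchain.tail, List.map_cons, List.prod_cons]
      · intro k hkmem hk1
        rw [Finset.mem_range] at hkmem
        match k, hk1 with
        | 0, _ =>
            rw [List.take_zero, List.drop_zero,
              show f [] = 1 from (hyp (j, f) (List.mem_cons_self)).2, List.map_cons]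
            have : (j :: B.map Prod.fst) = [j] ++ B.map Prod.fst := rfl
            rw [this, conv_vanish B (fun x hx => (hyp x (List.mem_cons_of_mem _ hx)).1) [j]
              (by simp) (by rw [← this]; exact hchain')]
            ring
        | (m + 2), _ =>
            have hfz : f ((((j, f) :: B).map Prod.fst).take (m + 2)) = 0 := by
              by_contra hf
              have hrep := (hyp (j, f) (List.mem_cons_self)).1 _ hf
              have hlen2 : ((((j, f) :: B).map Prod.fst).take (m + 2)).length = m + 2 := by
                rw [List.length_take]
                exact Nat.min_eq_left (Nat.lt_succ_iff.mp hkmem)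
              rw [hlen2] at hrep
              rw [List.map_cons, List.take_succ_cons] at hrep
              -- B.map fst is nonempty and starts with j, contradicting the chain
              have hlen : m + 1 ≤ (B.map Prod.fst).length := by
                rw [List.map_cons, List.length_cons] at hkmem
                omega
              cases hBf : B.map Prod.fst with
              | nil => rw [hBf] at hlen; simp at hlen
              | cons x l =>
                  rw [hBf, List.take_succ_cons, List.replicate_succ, List.replicate_succ] at hrep
                  have hxj : x = j := by
                    have h1 := (List.cons.injEq _ _ _ _).mp hrep
                    have h2 := (List.cons.injEq _ _ _ _).mp h1.2
                    exact h2.1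
                  have hchain2 : List.Chain' (· ≠ ·) (j :: B.map Prod.fst) := by
                    rw [List.map_cons] at hchain'
                    exact hchain'
                  have hne : j ≠ x := by
                    apply (List.isChain_cons.mp hchain2).1
                    rw [hBf]
                    rfl
                  exact hne hxj.symm
            rw [hfz]; ring
      · intro h1
        exfalso
        apply h1
        rw [Finset.mem_range, List.map_cons, List.length_cons]
        omega
/-- Endomorphisms raising the order filtration by `k`. -/
def Dd (k : ℕ) : Set (Module.End ℤ (M ι)) :=
  {T | ∀ (m : ℕ) (p : M ι), (∀ w : List ι, w.length < m → p w = 0) →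
    ∀ w : List ι, w.length < m + k → T p w = 0}

omit [DecidableEq ι] in
lemma Dd_mono {k l : ℕ} (h : l ≤ k) : (Dd k : Set (Module.End ℤ (M ι))) ⊆ Dd l :=
  fun T hT m p hp w hw => hT m p hp w (by omega)

omit [DecidableEq ι] in
lemma one_mem_Dd : (1 : Module.End ℤ (M ι)) ∈ Dd 0 :=
  fun m p hp w hw => hp w (by omega)

omit [DecidableEq ι] in
lemma zero_mem_Dd (k : ℕ) : (0 : Module.End ℤ (M ι)) ∈ Dd k :=
  fun m p hp w hw => rfl

omit [DecidableEq ι] in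
lemma mul_mem_Dd {T T' : Module.End ℤ (M ι)} {k l : ℕ} (hT : T ∈ Dd k) (hT' : T' ∈ Dd l) :
    T * T' ∈ Dd (k + l) := by
  intro m p hp w hw
  rw [Module.End.mul_apply]
  exact hT (m + l) (T' p) (fun v hv => hT' m p hp v hv) w (by omega)

omit [DecidableEq ι] in
lemma add_mem_Dd {T T' : Module.End ℤ (M ι)} {k : ℕ} (hT : T ∈ Dd k) (hT' : T' ∈ Dd k) :
    T + T' ∈ Dd k := by
  intro m p hp w hw
  rw [LinearMap.add_apply, Pi.add_apply, hT m p hp w hw, hT' m p hp w hw, add_zero]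

omit [DecidableEq ι] in
lemma neg_mem_Dd {T : Module.End ℤ (M ι)} {k : ℕ} (hT : T ∈ Dd k) : -T ∈ Dd k := by
  intro m p hp w hw
  rw [LinearMap.neg_apply, Pi.neg_apply, hT m p hp w hw, neg_zero]

omit [DecidableEq ι] in
lemma sub_mem_Dd {T T' : Module.End ℤ (M ι)} {k : ℕ} (hT : T ∈ Dd k) (hT' : T' ∈ Dd k) :
    T - T' ∈ Dd k := by
  rw [sub_eq_add_neg]; exact add_mem_Dd hT (neg_mem_Dd hT')

lemma S_mem_Dd (i : ι) : S i ∈ (Dd 1 : Set (Module.End ℤ (M ι))) := by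
  intro m p hp w hw
  cases w with
  | nil => rfl
  | cons j t =>
      rw [S_apply, Sfun_cons]
      have : p t = 0 := hp t (by simp at hw ⊢; omega)
      simp [this]

lemma V_mem_Dd (i : ι) : V i ∈ (Dd 0 : Set (Module.End ℤ (M ι))) := by
  intro m p hp w hw
  rw [V_apply, Vfun]
  apply Finset.sum_eq_zero
  intro k _
  rw [hp (w.drop k) (by rw [List.length_drop]; omega), mul_zero]

/-- The congruence subgroups of the unit group. -/
def Γ (k : ℕ) : Subgroup (Module.End ℤ (M ι))ˣ where
  carrier := {x | ((x : Module.End ℤ (M ι)) ∈ Dd 0) ∧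
    (((x⁻¹ : _ˣ) : Module.End ℤ (M ι)) ∈ Dd 0) ∧
    ((x : Module.End ℤ (M ι)) - 1 ∈ Dd k)}
  one_mem' := ⟨one_mem_Dd, by simpa using (one_mem_Dd (ι := ι)), by
    simpa using zero_mem_Dd k⟩
  mul_mem' := by
    rintro x y ⟨hx0, hxi, hxk⟩ ⟨hy0, hyi, hyk⟩
    refine ⟨?_, ?_, ?_⟩
    · rw [Units.val_mul]
      simpa using mul_mem_Dd hx0 hy0
    · rw [mul_inv_rev, Units.val_mul]
      simpa using mul_mem_Dd hyi hxi
    · have : ((x * y : _ˣ) : Module.End ℤ (M ι)) - 1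
          = (x : Module.End ℤ (M ι)) * ((y : Module.End ℤ (M ι)) - 1)
            + ((x : Module.End ℤ (M ι)) - 1) := by
        rw [Units.val_mul]; noncomm_ring
      rw [this]
      exact add_mem_Dd (by simpa using mul_mem_Dd hx0 hyk) hxk
  inv_mem' := by
    rintro x ⟨hx0, hxi, hxk⟩
    refine ⟨hxi, by simpa using hx0, ?_⟩
    have : ((x⁻¹ : _ˣ) : Module.End ℤ (M ι)) - 1
        = -(((x⁻¹ : _ˣ) : Module.End ℤ (M ι)) * ((x : Module.End ℤ (M ι)) - 1)) := by
      rw [mul_sub, mul_one]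
      rw [show ((x⁻¹ : _ˣ) : Module.End ℤ (M ι)) * (x : Module.End ℤ (M ι)) = 1 from
        by rw [← Units.val_mul, inv_mul_cancel, Units.val_one]]
      noncomm_ring
    rw [this]
    exact neg_mem_Dd (by simpa using mul_mem_Dd hxi hxk)

attribute [local instance] commutatorElement

lemma commutator_mem_Γ {x y : (Module.End ℤ (M ι))ˣ} {k : ℕ}
    (hx : x ∈ Γ k) (hy : y ∈ Γ 1) : ⁅x, y⁆ ∈ Γ (k + 1) := by
  obtain ⟨hx0, hxi, hxk⟩ := hx
  obtain ⟨hy0, hyi, hy1⟩ := hy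
  have hmem : (⁅x, y⁆ : (Module.End ℤ (M ι))ˣ) ∈ Γ 0 := by
    refine Subgroup.mul_mem _ (Subgroup.mul_mem _ (Subgroup.mul_mem _ ?_ ?_) ?_) ?_ <;>
      · first
        | exact ⟨hx0, hxi, Dd_mono (Nat.zero_le k) hxk⟩
        | exact ⟨hy0, hyi, Dd_mono (Nat.zero_le 1) hy1⟩
        | exact Subgroup.inv_mem _ ⟨hx0, hxi, Dd_mono (Nat.zero_le k) hxk⟩
        | exact Subgroup.inv_mem _ ⟨hy0, hyi, Dd_mono (Nat.zero_le 1) hy1⟩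
  obtain ⟨hc0, hci, -⟩ := hmem
  refine ⟨hc0, hci, ?_⟩
  set X := (x : Module.End ℤ (M ι))
  set Y := (y : Module.End ℤ (M ι))
  set X' := ((x⁻¹ : _ˣ) : Module.End ℤ (M ι))
  set Y' := ((y⁻¹ : _ˣ) : Module.End ℤ (M ι))
  have hXX' : X * X' = 1 := by rw [← Units.val_mul, mul_inv_cancel, Units.val_one]
  have hYY' : Y * Y' = 1 := by rw [← Units.val_mul, mul_inv_cancel, Units.val_one]
  have hval : ((⁅x, y⁆ : (Module.End ℤ (M ι))ˣ) : Module.End ℤ (M ι))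
      = X * Y * X' * Y' := by
    rw [commutatorElement_def]
    simp only [Units.val_mul, X, Y, X', Y']
  have hiden : X * Y * X' * Y' - 1
      = ((X - 1) * (Y - 1) - (Y - 1) * (X - 1)) * (X' * Y') := by
    have expand : (X - 1) * (Y - 1) - (Y - 1) * (X - 1) = X * Y - Y * X := by noncomm_ring
    rw [expand, sub_mul]
    have h1 : Y * X * (X' * Y') = 1 := by
      rw [show Y * X * (X' * Y') = Y * (X * X') * Y' by noncomm_ring, hXX', mul_one, hYY']
    have h2 : X * Y * (X' * Y') = X * Y * X' * Y' := by noncomm_ring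
    rw [h1, h2]
  rw [hval, hiden]
  have hd1 : (X - 1) * (Y - 1) ∈ Dd (k + 1) := mul_mem_Dd hxk hy1
  have hd2 : (Y - 1) * (X - 1) ∈ Dd (k + 1) := by
    have := mul_mem_Dd hy1 hxk
    rwa [add_comm] at this
  have := mul_mem_Dd (sub_mem_Dd hd1 hd2) (mul_mem_Dd hxi hyi)
  simpa using this
/-- The Magnus homomorphism. -/
noncomputable def φ : FreeGroup ι →* (Module.End ℤ (M ι))ˣ :=
  FreeGroup.lift u

@[simp] lemma φ_of (i : ι) : φ (FreeGroup.of i) = u i := FreeGroup.lift_apply_of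

lemma u_mem_Γ1 (i : ι) : u i ∈ (Γ 1 : Subgroup (Module.End ℤ (M ι))ˣ) := by
  refine ⟨?_, ?_, ?_⟩
  · rw [u_val]
    exact add_mem_Dd one_mem_Dd (Dd_mono (by omega) (S_mem_Dd i))
  · rw [u_inv]
    exact V_mem_Dd i
  · rw [u_val, add_sub_cancel_left]
    exact S_mem_Dd i

lemma φ_mem_Γ1 (a : FreeGroup ι) : φ a ∈ (Γ 1 : Subgroup (Module.End ℤ (M ι))ˣ) := by
  induction a using FreeGroup.induction_on with
  | C1 => rw [map_one]; exact Subgroup.one_mem _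
  | of i => rw [φ_of]; exact u_mem_Γ1 i
  | inv_of i h => rw [map_inv]; exact Subgroup.inv_mem _ h
  | mul x y hx hy => rw [map_mul]; exact Subgroup.mul_mem _ hx hy

lemma φ_mem_Γ_of_lcs (n : ℕ) (a : FreeGroup ι) (ha : a ∈ lowerCentralSeries (⊤ : Subgroup (FreeGroup ι)) n) :
    φ a ∈ (Γ (n + 1) : Subgroup (Module.End ℤ (M ι))ˣ) := by
  induction n generalizing a with
  | zero => exact φ_mem_Γ1 a
  | succ n ih =>
      have hle : lowerCentralSeries (⊤ : Subgroup (FreeGroup ι)) (n + 1)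
          ≤ Subgroup.comap (φ (ι := ι)) (Γ (n + 2)) := by
        show ⁅lowerCentralSeries (⊤ : Subgroup (FreeGroup ι)) n, ⊤⁆ ≤ _
        rw [Subgroup.commutator_le]
        intro g₁ hg₁ g₂ _
        rw [Subgroup.mem_comap, map_commutatorElement]
        exact commutator_mem_Γ (ih g₁ hg₁) (φ_mem_Γ1 g₂)
      exact hle ha
omit [DecidableEq ι] in
lemma exists_decomp_of_not_chain' {α : Type*} {R : α → α → Prop} :
    ∀ (l : List α), ¬ List.Chain' R l →
      ∃ (l₁ : List α) (a b : α) (l₂ : List α), l = l₁ ++ a :: b :: l₂ ∧ ¬ R a b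
  | [], h => absurd List.isChain_nil h
  | [a], h => absurd (List.isChain_singleton a) h
  | a :: b :: t, h => by
      by_cases hab : R a b
      · have : ¬ List.Chain' R (b :: t) := fun hc => h (List.isChain_cons_cons.mpr ⟨hab, hc⟩)
        obtain ⟨l₁, x, y, l₂, heq, hxy⟩ := exists_decomp_of_not_chain' (b :: t) this
        exact ⟨a :: l₁, x, y, l₂, by rw [heq]; rfl, hxy⟩
      · exact ⟨[], a, b, t, rfl, hab⟩

/-- The reduced word of a free group element has no adjacent inverse pairs. -/
lemma toWord_chain (x : FreeGroup ι) :
    List.Chain' (fun p q : ι × Bool => p.1 = q.1 → p.2 = q.2) x.toWord := by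
  by_contra h
  obtain ⟨l₁, p, q, l₂, heq, hpq⟩ := exists_decomp_of_not_chain' _ h
  push_neg at hpq
  obtain ⟨h1, h2⟩ := hpq
  have hq : q = (p.1, !p.2) := by
    obtain ⟨q1, q2⟩ := q
    simp only [Prod.mk.injEq]
    constructor
    · exact h1.symm
    · cases p2 : p.2 <;> cases q2v : q2 <;> simp_all
  have hred := FreeGroup.reduce_toWord x
  rw [heq] at hred
  have : l₁ ++ p :: q :: l₂ = l₁ ++ (p.1, p.2) :: (p.1, !p.2) :: l₂ := by rw [← hq]
  rw [this] at hred
  exact FreeGroup.reduce.not hred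

/-- Group a reduced word into blocks of equal letters. -/
def blocks : List (ι × Bool) → List (ι × Bool × ℕ)
  | [] => []
  | (i, b) :: L =>
    match blocks L with
    | [] => [(i, b, 1)]
    | (j, c, m) :: T =>
        if i = j ∧ b = c then (i, b, m + 1) :: T else (i, b, 1) :: (j, c, m) :: T

/-- Integer exponent of a block. -/
def zexp (c : Bool) (m : ℕ) : ℤ := if c then (m : ℤ) else -(m : ℤ)

lemma zexp_succ (c : Bool) (m : ℕ) : zexp c (m + 1) = zexp c 1 + zexp c m := by
  cases c <;> simp [zexp] <;> push_cast <;> ring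

lemma zexp_ne_zero {c : Bool} {m : ℕ} (h : 1 ≤ m) : zexp c m ≠ 0 := by
  cases c <;> simp [zexp] <;> omega

lemma of_zpow_zexp_one (i : ι) (c : Bool) :
    FreeGroup.of i ^ zexp c 1 = (if c then FreeGroup.of i else (FreeGroup.of i)⁻¹) := by
  cases c <;> simp [zexp]

lemma blocks_head : ∀ (L : List (ι × Bool)) (i : ι) (b : Bool) (L' : List (ι × Bool)),
    L = (i, b) :: L' → ∃ m T, blocks L = (i, b, m) :: T ∧ 1 ≤ m
  | _, i, b, L', rfl => by
    rw [blocks]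
    rcases hb : blocks L' with - | ⟨⟨j, c, m⟩, T⟩
    · exact ⟨1, [], rfl, le_refl 1⟩
    · dsimp only
      split
      · exact ⟨m + 1, T, rfl, by omega⟩
      · exact ⟨1, (j, c, m) :: T, rfl, le_refl 1⟩

lemma blocks_mem_pos : ∀ (L : List (ι × Bool)) (x : ι × Bool × ℕ), x ∈ blocks L → 1 ≤ x.2.2
  | [], x, hx => by simp [blocks] at hx
  | (i, b) :: L, x, hx => by
      rw [blocks] at hx
      rcases hb : blocks L with - | ⟨⟨j, c, m⟩, T⟩
      · rw [hb] at hx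
        simp only [List.mem_singleton] at hx
        subst hx; exact le_refl 1
      · rw [hb] at hx
        dsimp only at hx
        split at hx
        · rcases List.mem_cons.mp hx with rfl | hx
          · exact Nat.le_add_left 1 m
          · exact blocks_mem_pos L x (by rw [hb]; exact List.mem_cons_of_mem _ hx)
        · rcases List.mem_cons.mp hx with rfl | hx
          · exact le_refl 1
          · exact blocks_mem_pos L x (by rw [hb]; exact hx)

lemma blocks_prod : ∀ (L : List (ι × Bool)),
    ((blocks L).map (fun x => FreeGroup.of x.1 ^ zexp x.2.1 x.2.2)).prod
      = (L.map (fun p => if p.2 then FreeGroup.of p.1 else (FreeGroup.of p.1)⁻¹)).prod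
  | [] => by simp [blocks]
  | (i, b) :: L => by
      have ih := blocks_prod L
      rw [blocks, List.map_cons, List.prod_cons, ← of_zpow_zexp_one, ← ih]
      rcases hb : blocks L with - | ⟨⟨j, c, m⟩, T⟩
      · simp [← zexp_succ]
      · dsimp only
        split
        · next hcond =>
            obtain ⟨rfl, rfl⟩ := hcond
            rw [List.map_cons, List.prod_cons]
            dsimp only
            rw [show zexp b (m + 1) = zexp b 1 + zexp b m from zexp_succ b m,
              zpow_add, mul_assoc, List.map_cons, List.prod_cons]
        · rfl

lemma blocks_chain : ∀ (L : List (ι × Bool)),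
    List.Chain' (fun p q : ι × Bool => p.1 = q.1 → p.2 = q.2) L →
    List.Chain' (fun x y : ι × Bool × ℕ => x.1 ≠ y.1) (blocks L)
  | [], _ => by simp [blocks, List.Chain']
  | [(i, b)], _ => by simp [blocks, List.Chain']
  | (i, b) :: (i', b') :: L, hch => by
      have hred : i = i' → b = b' := List.isChain_cons_cons.mp hch |>.1
      have ih := blocks_chain ((i', b') :: L) (List.isChain_cons_cons.mp hch).2
      obtain ⟨m, T, hbT, -⟩ := blocks_head ((i', b') :: L) i' b' L rfl
      rw [blocks, hbT]
      rw [hbT] at ih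
      dsimp only
      split
      · next hcond =>
          obtain ⟨rfl, rfl⟩ := hcond
          unfold List.Chain' at ih ⊢
          rw [List.isChain_cons] at ih ⊢
          exact ih
      · next hcond =>
          have hne : i ≠ i' := by
            intro hii
            exact hcond ⟨hii, hred hii⟩
          exact List.isChain_cons_cons.mpr ⟨hne, ih⟩
lemma mk_eq_prod : ∀ (L : List (ι × Bool)),
    FreeGroup.mk L = (L.map (fun p => if p.2 then FreeGroup.of p.1 else (FreeGroup.of p.1)⁻¹)).prod
  | [] => FreeGroup.one_eq_mk.symm
  | (i, b) :: L => by
      rw [List.map_cons, List.prod_cons, ← mk_eq_prod L,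
        show ((i, b) :: L) = [(i, b)] ++ L from rfl, ← FreeGroup.mul_mk]
      congr 1
      cases b
      · show FreeGroup.mk [(i, false)] = (FreeGroup.of i)⁻¹
        rw [show (FreeGroup.of i) = FreeGroup.mk [(i, true)] from rfl, FreeGroup.inv_mk]
        simp [FreeGroup.invRev]
      · rfl

lemma prod_apply_delta : ∀ (B : List (ι × Bool × ℕ)),
    (((B.map (fun y => u y.1 ^ zexp y.2.1 y.2.2)).prod : (Module.End ℤ (M ι))ˣ) :
        Module.End ℤ (M ι)) δ
      = conv (B.map (fun y => (y.1, q y.1 (zexp y.2.1 y.2.2))))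
  | [] => by simp [conv]
  | y :: B => by
      rw [List.map_cons, List.prod_cons, List.map_cons, conv]
      dsimp only
      rw [Units.val_mul, Module.End.mul_apply, prod_apply_delta B, zpow_u_apply]
      rfl

/-- Residual nilpotence of free groups (Magnus). -/
lemma eq_one_of_mem_all_lcs (x : FreeGroup ι)
    (h : ∀ n, x ∈ lowerCentralSeries (⊤ : Subgroup (FreeGroup ι)) n) : x = 1 := by
  by_contra hx
  have hLne : x.toWord ≠ [] := fun h0 => hx (FreeGroup.toWord_eq_nil_iff.mp h0)
  set B := blocks x.toWord with hB
  have hBne : B ≠ [] := by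
    cases hLc : x.toWord with
    | nil => exact absurd hLc hLne
    | cons p L' =>
        obtain ⟨m, T, hbT, -⟩ := blocks_head x.toWord p.1 p.2 L' (by rw [hLc])
        rw [hB, hbT]
        simp
  have hxprod : x = (B.map (fun y => FreeGroup.of y.1 ^ zexp y.2.1 y.2.2)).prod := by
    rw [hB, blocks_prod, ← mk_eq_prod, FreeGroup.mk_toWord]
  have hφx : φ x = (B.map (fun y => u y.1 ^ zexp y.2.1 y.2.2)).prod := by
    conv_lhs => rw [hxprod]
    rw [map_list_prod, List.map_map]
    congr 1
    apply List.map_congr_left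
    intro y _
    simp only [Function.comp_apply, map_zpow, φ_of]
  set BM : List (ι × M ι) := B.map (fun y => (y.1, q y.1 (zexp y.2.1 y.2.2))) with hBM
  have hsuppBM : ∀ z ∈ BM, PowSupp z.1 z.2 ∧ z.2 [] = 1 := by
    intro z hz
    rw [hBM] at hz
    obtain ⟨y, -, rfl⟩ := List.mem_map.mp hz
    exact ⟨(q_spec y.1 _).1, (q_spec y.1 _).2.1⟩
  have hchainBM : List.Chain' (fun z w : ι × M ι => z.1 ≠ w.1) BM := by
    rw [hBM, List.Chain', List.isChain_map]
    exact blocks_chain x.toWord (toWord_chain x)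
  have hval : conv BM (BM.map Prod.fst) = (BM.map (fun z => z.2 [z.1])).prod :=
    conv_coeff BM hsuppBM hchainBM
  have hnz : (BM.map (fun z => z.2 [z.1])).prod ≠ 0 := by
    apply List.prod_ne_zero
    intro h0
    obtain ⟨z, hz, hz0⟩ := List.mem_map.mp h0
    rw [hBM] at hz
    obtain ⟨y, hy, rfl⟩ := List.mem_map.mp hz
    dsimp only at hz0
    rw [(q_spec y.1 _).2.2] at hz0
    exact zexp_ne_zero (blocks_mem_pos x.toWord y (by rw [← hB]; exact hy)) hz0
  have hδ : ((φ x : (Module.End ℤ (M ι))ˣ) : Module.End ℤ (M ι)) δ = conv BM := by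
    rw [hφx, prod_apply_delta, hBM]
  set W : List ι := BM.map Prod.fst with hW
  have hWne : W ≠ [] := by
    rw [hW, hBM]
    simpa using hBne
  obtain ⟨-, -, hD⟩ := φ_mem_Γ_of_lcs W.length x (h W.length)
  have h0 : ((((φ x : (Module.End ℤ (M ι))ˣ) : Module.End ℤ (M ι)) - 1) δ) W = 0 :=
    hD 0 δ (fun w hw => absurd hw (Nat.not_lt_zero _)) W (by omega)
  rw [LinearMap.sub_apply, Pi.sub_apply, Module.End.one_apply, δ_ne hWne, sub_zero, hδ] at h0
  rw [hval] at h0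
  exact hnz h0

end Stmt1Aux

/-- In a free group, if an element `a` is conjugate to the commutator
`[b,c] = b⁻¹ * c⁻¹ * b * c` of some elements `b, c`, and `b` is conjugate to the
commutator `[a,d]` of `a` and some element `d`, then `a = b = 1`. -/
theorem stmt1 {ι : Type*} (a b c d : FreeGroup ι)
    (h1 : IsConj a (b⁻¹ * c⁻¹ * b * c))
    (h2 : IsConj b (a⁻¹ * d⁻¹ * a * d)) :
    a = 1 ∧ b = 1 := by
  classical
  have step : ∀ (x y z : FreeGroup ι) (n : ℕ), IsConj x (y⁻¹ * z⁻¹ * y * z) →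
      y ∈ lowerCentralSeries (⊤ : Subgroup (FreeGroup ι)) n →
      x ∈ lowerCentralSeries (⊤ : Subgroup (FreeGroup ι)) (n + 1) := by
    intro x y z n hconj hy
    obtain ⟨g, hg⟩ := isConj_iff.mp hconj
    have hcomm : y⁻¹ * z⁻¹ * y * z ∈ lowerCentralSeries (⊤ : Subgroup (FreeGroup ι)) (n + 1) := by
      letI : Bracket (FreeGroup ι) (FreeGroup ι) := commutatorElement
      have heq : y⁻¹ * z⁻¹ * y * z = ⁅y⁻¹, z⁻¹⁆ := by
        rw [commutatorElement_def, inv_inv, inv_inv]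
      show _ ∈ ⁅lowerCentralSeries (⊤ : Subgroup (FreeGroup ι)) n, ⊤⁆
      rw [heq]
      exact Subgroup.commutator_mem_commutator (Subgroup.inv_mem _ hy) (Subgroup.mem_top _)
    have hx : x = g⁻¹ * (y⁻¹ * z⁻¹ * y * z) * g⁻¹⁻¹ := by
      rw [← hg]; group
    rw [hx]
    exact Subgroup.Normal.conj_mem (Subgroup.lowerCentralSeries_normal ⊤ (n + 1)) _ hcomm g⁻¹
  have key : ∀ n : ℕ, a ∈ lowerCentralSeries (⊤ : Subgroup (FreeGroup ι)) n ∧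
      b ∈ lowerCentralSeries (⊤ : Subgroup (FreeGroup ι)) n := by
    intro n
    induction n with
    | zero => exact ⟨Subgroup.mem_top a, Subgroup.mem_top b⟩
    | succ n ih =>
        exact ⟨step a b c n h1 ih.2, step b a d n h2 ih.1⟩
  exact ⟨Stmt1Aux.eq_one_of_mem_all_lcs a (fun n => (key n).1),
    Stmt1Aux.eq_one_of_mem_all_lcs b (fun n => (key n).2)⟩
end

section
/- Let Γ = F ⋊_α ⟨t⟩ be the suspension of α ∈ Aut(F), where F has trivial center. Then Out_fo(Γ), the group of fibre- and orientation-preserving automorphisms of Γ modulo inner automorphisms of Γ, is isomorphic to Z_{Out(F)}([α])/⟨[α]⟩, the centralizer of the class [α] in Out(F) modulo the cyclic subgroup generated by [α]. -/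
open SemidirectProduct

/-- The suspension (mapping torus) of an automorphism `α` of a group `F`. -/
abbrev Suspension (F : Type*) [Group F] (α : MulAut F) :=
  F ⋊[zpowersHom (MulAut F) α] Multiplicative ℤ

/-- The fibre `F` of the suspension, as a subgroup. -/
def fibre (F : Type*) [Group F] (α : MulAut F) : Subgroup (Suspension F α) :=
  (SemidirectProduct.inl : F →* Suspension F α).range

/-- The distinguished element `t` generating the orientation of the suspension. -/
def tEl (F : Type*) [Group F] (α : MulAut F) : Suspension F α :=
  SemidirectProduct.inr (Multiplicative.ofAdd (1 : ℤ))

/-- The subgroup of inner automorphisms of a group. -/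
def innAut (G : Type*) [Group G] : Subgroup (MulAut G) :=
  (MulAut.conj : G →* MulAut G).range

instance innAut_normal (G : Type*) [Group G] : (innAut G).Normal := by
  constructor
  rintro x ⟨g, rfl⟩ φ
  refine ⟨φ g, ?_⟩
  ext y
  show MulAut.conj (φ g) y = φ (MulAut.conj g (φ⁻¹ y))
  simp [MulAut.conj_apply, map_mul, map_inv, mul_assoc]

/-- The group of fibre and orientation preserving automorphisms of the
suspension: automorphisms preserving the fibre `F` setwise and sending `t` into
the coset `tF`. -/
def autFO (F : Type*) [Group F] (α : MulAut F) : Subgroup (MulAut (Suspension F α)) where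
  carrier := {φ | (∀ x, x ∈ fibre F α ↔ φ x ∈ fibre F α) ∧
    (tEl F α)⁻¹ * φ (tEl F α) ∈ fibre F α}
  one_mem' := ⟨fun _ => Iff.rfl, by simpa using (fibre F α).one_mem⟩
  mul_mem' := by
    rintro φ ψ ⟨hφ1, hφ2⟩ ⟨hψ1, hψ2⟩
    refine ⟨fun x => (hψ1 x).trans (hφ1 (ψ x)), ?_⟩
    have key : (tEl F α)⁻¹ * (φ * ψ) (tEl F α) =
        ((tEl F α)⁻¹ * φ (tEl F α)) * φ ((tEl F α)⁻¹ * ψ (tEl F α)) := by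
      simp [MulAut.mul_apply, map_mul, mul_assoc]
    rw [key]
    exact mul_mem hφ2 ((hφ1 _).mp hψ2)
  inv_mem' := by
    rintro φ ⟨hφ1, hφ2⟩
    refine ⟨fun x => ?_, ?_⟩
    · constructor
      · intro hx
        have := (hφ1 (φ⁻¹ x)).mpr
        apply this
        simpa using hx
      · intro hx
        have := (hφ1 (φ⁻¹ x)).mp hx
        simpa using this
    · have h : φ ((tEl F α)⁻¹ * φ⁻¹ (tEl F α)) =
          ((tEl F α)⁻¹ * φ (tEl F α))⁻¹ := by
        simp [map_mul, map_inv, mul_assoc]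
      have : φ ((tEl F α)⁻¹ * φ⁻¹ (tEl F α)) ∈ fibre F α := by
        rw [h]; exact inv_mem hφ2
      exact (hφ1 _).mpr this

/-- The subgroup `⟨[α]⟩` generated by the class of `α` inside the centralizer of
`[α]` in `Out(F) = Aut(F)/Inn(F)`. -/
def zpowersInCentralizer (F : Type*) [Group F] (α : MulAut F) :
    Subgroup ↥(Subgroup.centralizer
      ({((α : MulAut F) : MulAut F ⧸ innAut F)} : Set (MulAut F ⧸ innAut F))) :=
  (Subgroup.zpowers ((α : MulAut F) : MulAut F ⧸ innAut F)).subgroupOf _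

instance zpowersInCentralizer_normal (F : Type*) [Group F] (α : MulAut F) :
    (zpowersInCentralizer F α).Normal := by
  constructor
  intro x hx g
  unfold zpowersInCentralizer at hx ⊢
  rw [Subgroup.mem_subgroupOf] at hx ⊢
  obtain ⟨n, hn⟩ := Subgroup.mem_zpowers_iff.mp hx
  rw [Subgroup.mem_zpowers_iff]
  refine ⟨n, ?_⟩
  have hg : Commute ((α : MulAut F) : MulAut F ⧸ innAut F) (g : MulAut F ⧸ innAut F) :=
    (Subgroup.mem_centralizer_iff.mp g.2 _ (Set.mem_singleton _))
  have hcomm : Commute (((α : MulAut F) : MulAut F ⧸ innAut F) ^ n)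
      (g : MulAut F ⧸ innAut F) := hg.zpow_left n
  have hco : ((g * x * g⁻¹ : _) : MulAut F ⧸ innAut F) =
      (g : MulAut F ⧸ innAut F) * (x : MulAut F ⧸ innAut F) * (g : MulAut F ⧸ innAut F)⁻¹ :=
    rfl
  have hkey : (g : MulAut F ⧸ innAut F) * (((α : MulAut F) : MulAut F ⧸ innAut F) ^ n) *
      (g : MulAut F ⧸ innAut F)⁻¹ = ((α : MulAut F) : MulAut F ⧸ innAut F) ^ n := by
    rw [← hcomm.eq]; group
  rw [hco, ← hn, hkey]

instance innAut_le_autFO_normal (F : Type*) [Group F] (α : MulAut F) :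
    ((innAut (Suspension F α)).subgroupOf (autFO F α)).Normal :=
  Subgroup.Normal.subgroupOf (innAut_normal _) _

namespace Stmt7Aux
variable {F : Type*} [Group F] (α : MulAut F)

lemma mem_fibre_iff (x : Suspension F α) : x ∈ fibre F α ↔ x.right = 1 := by
  rw [fibre, SemidirectProduct.range_inl_eq_ker_rightHom]
  exact Iff.rfl

lemma inl_mem_fibre (f : F) : (inl f : Suspension F α) ∈ fibre F α := ⟨f, rfl⟩

lemma eq_inl_of_mem_fibre {x : Suspension F α} (h : x ∈ fibre F α) : x = inl x.left := by
  have := (mem_fibre_iff α x).mp h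
  ext <;> simp [this]

lemma t_conj (f : F) : tEl F α * inl f * (tEl F α)⁻¹ = inl (α f) := by
  rw [tEl, ← map_inv, ← inl_aut]
  simp [zpowersHom_apply]

/-- underlying function of the restriction to the fibre -/
def resFun (e : MulAut (Suspension F α)) (f : F) : F := (e (inl f)).left

lemma resFun_spec (φ : autFO F α) (f : F) :
    (φ : MulAut (Suspension F α)) (inl f) =
      inl (resFun α (φ : MulAut (Suspension F α)) f) :=
  eq_inl_of_mem_fibre α ((φ.2.1 (inl f)).mp (inl_mem_fibre α f))

lemma coe_inv (φ : autFO F α) :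
    ((φ⁻¹ : autFO F α) : MulAut (Suspension F α)) = (φ : MulAut (Suspension F α))⁻¹ := rfl

/-- restriction of a fibre-preserving automorphism to the fibre -/
def res (φ : autFO F α) : MulAut F where
  toFun := resFun α (φ : MulAut (Suspension F α))
  invFun := resFun α ((φ⁻¹ : autFO F α) : MulAut (Suspension F α))
  left_inv f := inl_injective (calc
    (inl (resFun α ((φ⁻¹ : autFO F α) : MulAut (Suspension F α))
        (resFun α (φ : MulAut (Suspension F α)) f)) : Suspension F α)
        = ((φ⁻¹ : autFO F α) : MulAut (Suspension F α))
            (inl (resFun α (φ : MulAut (Suspension F α)) f)) :=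
          (resFun_spec α φ⁻¹ _).symm
    _ = ((φ⁻¹ : autFO F α) : MulAut (Suspension F α))
          ((φ : MulAut (Suspension F α)) (inl f)) := by rw [resFun_spec α φ f]
    _ = inl f := by rw [coe_inv]; exact MulEquiv.symm_apply_apply _ _)
  right_inv f := inl_injective (calc
    (inl (resFun α (φ : MulAut (Suspension F α))
        (resFun α ((φ⁻¹ : autFO F α) : MulAut (Suspension F α)) f)) : Suspension F α)
        = (φ : MulAut (Suspension F α))
            (inl (resFun α ((φ⁻¹ : autFO F α) : MulAut (Suspension F α)) f)) :=
          (resFun_spec α φ _).symm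
    _ = (φ : MulAut (Suspension F α))
          (((φ⁻¹ : autFO F α) : MulAut (Suspension F α)) (inl f)) := by
            rw [resFun_spec α φ⁻¹ f]
    _ = inl f := by rw [coe_inv]; exact MulEquiv.apply_symm_apply _ _)
  map_mul' f g := inl_injective (calc
    (inl (resFun α (φ : MulAut (Suspension F α)) (f * g)) : Suspension F α)
        = (φ : MulAut (Suspension F α)) (inl (f * g)) := (resFun_spec α φ _).symm
    _ = (φ : MulAut (Suspension F α)) (inl f * inl g) := by rw [map_mul inl]
    _ = (φ : MulAut (Suspension F α)) (inl f) * (φ : MulAut (Suspension F α)) (inl g) :=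
          map_mul _ _ _
    _ = inl (resFun α (φ : MulAut (Suspension F α)) f) *
          inl (resFun α (φ : MulAut (Suspension F α)) g) := by
            rw [resFun_spec α φ f, resFun_spec α φ g]
    _ = inl (resFun α (φ : MulAut (Suspension F α)) f *
          resFun α (φ : MulAut (Suspension F α)) g) := (map_mul inl _ _).symm)

lemma res_apply (φ : autFO F α) (f : F) :
    (φ : MulAut (Suspension F α)) (inl f) = inl (res α φ f) := resFun_spec α φ f

/-- restriction as a group hom -/
def resM : autFO F α →* MulAut F :=
  MonoidHom.mk' (res α) (fun φ ψ => MulEquiv.ext (fun f => inl_injective (calc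
    (inl (res α (φ * ψ) f) : Suspension F α)
        = ((φ * ψ : autFO F α) : MulAut (Suspension F α)) (inl f) := (res_apply α _ f).symm
    _ = (φ : MulAut (Suspension F α)) ((ψ : MulAut (Suspension F α)) (inl f)) := rfl
    _ = (φ : MulAut (Suspension F α)) (inl (res α ψ f)) := by rw [res_apply α ψ f]
    _ = inl (res α φ (res α ψ f)) := res_apply α φ _)))

/-- the element g₀ with φ(t) = t·inl g₀ -/
def g0 (φ : autFO F α) : F := ((tEl F α)⁻¹ * (φ : MulAut (Suspension F α)) (tEl F α)).left

lemma phi_t (φ : autFO F α) :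
    (φ : MulAut (Suspension F α)) (tEl F α) = tEl F α * inl (g0 α φ) := by
  have h := eq_inl_of_mem_fibre α φ.2.2
  rw [g0, ← h]
  group

lemma key (φ : autFO F α) (f : F) :
    res α φ (α f) = α (g0 α φ * res α φ f * (g0 α φ)⁻¹) := by
  have h1 : (φ : MulAut (Suspension F α)) (tEl F α * inl f * (tEl F α)⁻¹) =
      (φ : MulAut (Suspension F α)) (tEl F α) * (φ : MulAut (Suspension F α)) (inl f) *
      ((φ : MulAut (Suspension F α)) (tEl F α))⁻¹ := by
    simp [map_mul]
  rw [t_conj, res_apply, res_apply, phi_t] at h1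
  refine inl_injective (φ := zpowersHom (MulAut F) α) ?_
  rw [h1, ← t_conj α (g0 α φ * res α φ f * (g0 α φ)⁻¹)]
  simp only [map_mul, map_inv, mul_inv_rev]
  group

end Stmt7Aux

namespace Stmt7Aux
variable {F : Type*} [Group F] (α : MulAut F)

lemma res_conj_rel (φ : autFO F α) :
    res α φ * α * (res α φ)⁻¹ * α⁻¹ = MulAut.conj (α (g0 α φ)) := by
  ext x
  have hk := key α φ ((res α φ)⁻¹ (α⁻¹ x))
  simp only [MulAut.mul_apply, MulAut.conj_apply]
  have h1 : res α φ ((res α φ)⁻¹ (α⁻¹ x)) = α⁻¹ x := by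
    exact (res α φ).apply_symm_apply _
  rw [h1] at hk
  show res α φ (α ((res α φ)⁻¹ (α⁻¹ x))) = _
  rw [hk]
  have h2 : α (α⁻¹ x) = x := α.apply_symm_apply x
  simp only [map_mul, map_inv, h2]

open scoped commutatorElement in
lemma mk_res_comm (φ : autFO F α) :
    ((α : MulAut F) : MulAut F ⧸ innAut F) * ((res α φ : MulAut F) : MulAut F ⧸ innAut F) =
      ((res α φ : MulAut F) : MulAut F ⧸ innAut F) * ((α : MulAut F) : MulAut F ⧸ innAut F) := by
  have hmem : res α φ * α * (res α φ)⁻¹ * α⁻¹ ∈ innAut F :=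
    ⟨α (g0 α φ), (res_conj_rel α φ).symm⟩
  have h1 : (((res α φ * α * (res α φ)⁻¹ * α⁻¹ : MulAut F)) : MulAut F ⧸ innAut F) = 1 :=
    (QuotientGroup.eq_one_iff _).mpr hmem
  have h2 : ⁅((res α φ : MulAut F) : MulAut F ⧸ innAut F),
      ((α : MulAut F) : MulAut F ⧸ innAut F)⁆ = 1 := by
    rw [commutatorElement_def]
    simpa using h1
  exact (commutatorElement_eq_one_iff_commute.mp h2).symm.eq

/-- the map `Aut_fo → Z_{Out(F)}([α])` -/
def theta : autFO F α →* ↥(Subgroup.centralizer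
    ({((α : MulAut F) : MulAut F ⧸ innAut F)} : Set (MulAut F ⧸ innAut F))) :=
  MonoidHom.codRestrict ((QuotientGroup.mk' (innAut F)).comp (resM α)) _ (by
    intro φ
    rw [Subgroup.mem_centralizer_iff]
    rintro g hg
    rw [Set.mem_singleton_iff] at hg
    subst hg
    exact mk_res_comm α φ)

lemma theta_coe (φ : autFO F α) :
    (theta α φ : MulAut F ⧸ innAut F) = ((res α φ : MulAut F) : MulAut F ⧸ innAut F) := rfl

lemma conj_mem_autFO (γ : Suspension F α) : MulAut.conj γ ∈ autFO F α := by
  constructor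
  · intro x
    rw [mem_fibre_iff, mem_fibre_iff]
    have : (MulAut.conj γ x).right = x.right := by
      show (γ * x * γ⁻¹).right = x.right
      have : (γ * x * γ⁻¹).right = γ.right * x.right * γ.right⁻¹ := by
        simp [mul_right]
      rw [this, mul_comm γ.right x.right]
      group
    rw [this]
  · rw [mem_fibre_iff]
    show ((tEl F α)⁻¹ * (γ * tEl F α * γ⁻¹)).right = 1
    have : ((tEl F α)⁻¹ * (γ * tEl F α * γ⁻¹)).right =
        (tEl F α).right⁻¹ * (γ.right * (tEl F α).right * γ.right⁻¹) := by
      simp [mul_right]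
    rw [this, mul_comm γ.right (tEl F α).right]
    group

lemma res_of_coe_eq_conj (φ : autFO F α) (γ : Suspension F α)
    (hφ : (φ : MulAut (Suspension F α)) = MulAut.conj γ) :
    res α φ = MulAut.conj γ.left * α ^ (Multiplicative.toAdd γ.right) := by
  ext x
  refine inl_injective (φ := zpowersHom (MulAut F) α) ?_
  rw [← res_apply α φ x, hφ]
  show γ * inl x * γ⁻¹ = inl ((MulAut.conj γ.left * α ^ (Multiplicative.toAdd γ.right)) x)
  rw [MulAut.mul_apply, MulAut.conj_apply]
  ext
  · simp [mul_left, inv_left, mul_assoc, zpowersHom_apply]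
  · simp [mul_right]

end Stmt7Aux

namespace Stmt7Aux
variable {F : Type*} [Group F] (α : MulAut F)

section lift
variable (β : MulAut F) (g : F)

/-- the image of `t` under the automorphism built from `β` and `g` -/
def TT : Suspension F α := tEl F α * inl g

lemma TT_conj (hk : ∀ f, β (α f) = α (g * β f * g⁻¹)) (f : F) :
    TT α g * inl (β f) * (TT α g)⁻¹ = inl (β (α f)) := by
  rw [hk, ← t_conj α (g * β f * g⁻¹), TT]
  simp only [map_mul, map_inv, mul_inv_rev]
  group

lemma TT_conj_inv (hk : ∀ f, β (α f) = α (g * β f * g⁻¹)) (f : F) :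
    (TT α g)⁻¹ * inl (β f) * TT α g = inl (β (α⁻¹ f)) := by
  have := TT_conj α β g hk (α⁻¹ f)
  rw [show α (α⁻¹ f) = f from α.apply_symm_apply f] at this
  rw [← this]
  group

lemma TT_conj_zpow (hk : ∀ f, β (α f) = α (g * β f * g⁻¹)) (n : ℤ) (f : F) :
    TT α g ^ n * inl (β f) * (TT α g ^ n)⁻¹ = inl (β ((α ^ n) f)) := by
  induction n using Int.induction_on with
  | zero => simp
  | succ k ih =>
    have h1 : TT α g ^ ((k : ℤ) + 1) = TT α g * TT α g ^ (k : ℤ) := by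
      rw [show ((k : ℤ) + 1) = 1 + (k : ℤ) by ring, zpow_one_add]
    rw [h1]
    have h2 : TT α g * TT α g ^ (k : ℤ) * inl (β f) * (TT α g * TT α g ^ (k : ℤ))⁻¹ =
        TT α g * (TT α g ^ (k : ℤ) * inl (β f) * (TT α g ^ (k : ℤ))⁻¹) * (TT α g)⁻¹ := by
      group
    rw [h2, ih, TT_conj α β g hk]
    have h3 : (α : MulAut F) ((α ^ (k : ℤ)) f) = (α ^ ((k : ℤ) + 1)) f := by
      rw [show ((k : ℤ) + 1) = 1 + (k : ℤ) by ring, ← MulAut.mul_apply, ← zpow_one_add]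
    rw [h3]
  | pred k ih =>
    have h1 : TT α g ^ (-(k : ℤ) - 1) = (TT α g)⁻¹ * TT α g ^ (-(k : ℤ)) := by
      rw [← zpow_neg_one, ← zpow_add]
      congr 1
      ring
    rw [h1]
    have h2 : (TT α g)⁻¹ * TT α g ^ (-(k : ℤ)) * inl (β f) *
        ((TT α g)⁻¹ * TT α g ^ (-(k : ℤ)))⁻¹ =
        (TT α g)⁻¹ * (TT α g ^ (-(k : ℤ)) * inl (β f) * (TT α g ^ (-(k : ℤ)))⁻¹) * TT α g := by
      group
    rw [h2, ih, TT_conj_inv α β g hk]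
    have h3 : (α⁻¹ : MulAut F) ((α ^ (-(k : ℤ))) f) = (α ^ (-(k : ℤ) - 1)) f := by
      rw [show (-(k : ℤ) - 1) = -1 + -(k : ℤ) by ring, ← MulAut.mul_apply, zpow_add, zpow_neg_one]
    rw [h3]

/-- the lifted endomorphism of the suspension -/
def liftHom (hk : ∀ f, β (α f) = α (g * β f * g⁻¹)) : Suspension F α →* Suspension F α :=
  SemidirectProduct.lift ((inl : F →* Suspension F α).comp β.toMonoidHom)
    (zpowersHom (Suspension F α) (TT α g)) (by
      intro n
      refine MonoidHom.ext fun f => ?_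
      show inl (β ((α ^ (Multiplicative.toAdd n)) f)) =
        MulAut.conj (TT α g ^ (Multiplicative.toAdd n)) (inl (β f))
      rw [MulAut.conj_apply, TT_conj_zpow α β g hk])

@[simp]
lemma liftHom_inl (hk : ∀ f, β (α f) = α (g * β f * g⁻¹)) (f : F) :
    liftHom α β g hk (inl f) = inl (β f) := by
  simp [liftHom]

lemma liftHom_t (hk : ∀ f, β (α f) = α (g * β f * g⁻¹)) :
    liftHom α β g hk (tEl F α) = TT α g := by
  rw [tEl, liftHom, lift_inr]
  simp [zpowersHom_apply]

lemma rightHom_liftHom (hk : ∀ f, β (α f) = α (g * β f * g⁻¹)) (x : Suspension F α) :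
    (liftHom α β g hk x).right = x.right := by
  have h : rightHom.comp (liftHom α β g hk) = (rightHom : Suspension F α →* Multiplicative ℤ) := by
    apply SemidirectProduct.hom_ext
    · ext f; simp
    · apply MonoidHom.ext_mint
      show rightHom (liftHom α β g hk (inr (Multiplicative.ofAdd 1))) = _
      rw [show (inr (Multiplicative.ofAdd 1) : Suspension F α) = tEl F α from rfl,
        liftHom_t α β g hk, TT]
      simp [tEl]
  exact DFunLike.congr_fun h x

lemma hk_inv (hk : ∀ f, β (α f) = α (g * β f * g⁻¹)) (f : F) :
    β⁻¹ (α f) = α (β⁻¹ g⁻¹ * β⁻¹ f * (β⁻¹ g⁻¹)⁻¹) := by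
  have h := hk (β⁻¹ (g⁻¹ * f * g))
  have hb : β (β⁻¹ (g⁻¹ * f * g)) = g⁻¹ * f * g := by
    rw [MulAut.inv_def]; exact β.apply_symm_apply _
  rw [hb] at h
  have h2 : g * (g⁻¹ * f * g) * g⁻¹ = f := by group
  rw [h2] at h
  calc β⁻¹ (α f) = β⁻¹ (β (α (β⁻¹ (g⁻¹ * f * g)))) := by rw [h]
  _ = α (β⁻¹ (g⁻¹ * f * g)) := by rw [MulAut.inv_def]; exact β.symm_apply_apply _
  _ = α (β⁻¹ g⁻¹ * β⁻¹ f * (β⁻¹ g⁻¹)⁻¹) := by simp only [map_mul, map_inv, inv_inv]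

lemma liftHom_comp (hk : ∀ f, β (α f) = α (g * β f * g⁻¹)) :
    (liftHom α β g hk).comp (liftHom α β⁻¹ (β⁻¹ g⁻¹) (hk_inv α β g hk)) =
      MonoidHom.id (Suspension F α) := by
  apply SemidirectProduct.hom_ext
  · refine MonoidHom.ext fun f => ?_
    show liftHom α β g hk (liftHom α β⁻¹ (β⁻¹ g⁻¹) (hk_inv α β g hk) (inl f)) = inl f
    rw [liftHom_inl, liftHom_inl]
    congr 1
    exact β.apply_symm_apply f
  · apply MonoidHom.ext_mint
    show liftHom α β g hk (liftHom α β⁻¹ (β⁻¹ g⁻¹) (hk_inv α β g hk)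
      (inr (Multiplicative.ofAdd 1))) = inr (Multiplicative.ofAdd 1)
    rw [show (inr (Multiplicative.ofAdd 1) : Suspension F α) = tEl F α from rfl,
      liftHom_t, TT, map_mul, liftHom_t, liftHom_inl, TT]
    have : β (β⁻¹ g⁻¹) = g⁻¹ := β.apply_symm_apply _
    rw [this, mul_assoc, ← map_mul]
    simp

end lift

end Stmt7Aux

namespace Stmt7Aux
variable {F : Type*} [Group F] (α : MulAut F)

section build
variable (β : MulAut F) (g : F)

lemma liftHom_congr (β' : MulAut F) (g' : F) (hβ : β = β') (hg : g = g')
    (hk : ∀ f, β (α f) = α (g * β f * g⁻¹)) (hk' : ∀ f, β' (α f) = α (g' * β' f * g'⁻¹)) :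
    liftHom α β g hk = liftHom α β' g' hk' := by subst hβ; subst hg; rfl

/-- the automorphism of the suspension built from `β` and `g` -/
def mulAutOf (hk : ∀ f, β (α f) = α (g * β f * g⁻¹)) : MulAut (Suspension F α) where
  toFun := liftHom α β g hk
  invFun := liftHom α β⁻¹ (β⁻¹ g⁻¹) (hk_inv α β g hk)
  right_inv x := DFunLike.congr_fun (liftHom_comp α β g hk) x
  left_inv x := by
    have h := liftHom_comp α β⁻¹ (β⁻¹ g⁻¹) (hk_inv α β g hk)
    have he : liftHom α β⁻¹⁻¹ (β⁻¹⁻¹ (β⁻¹ g⁻¹)⁻¹)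
        (hk_inv α β⁻¹ (β⁻¹ g⁻¹) (hk_inv α β g hk)) = liftHom α β g hk := by
      refine liftHom_congr α _ _ _ _ (inv_inv β) ?_ _ _
      rw [inv_inv]
      have h1 : (β⁻¹ g⁻¹)⁻¹ = β⁻¹ g := by rw [← map_inv, inv_inv]
      rw [h1, MulAut.inv_def, β.apply_symm_apply]
    rw [he] at h
    exact DFunLike.congr_fun h x
  map_mul' := map_mul _

lemma mulAutOf_mem (hk : ∀ f, β (α f) = α (g * β f * g⁻¹)) :
    mulAutOf α β g hk ∈ autFO F α := by
  constructor
  · intro x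
    rw [mem_fibre_iff, mem_fibre_iff]
    show x.right = 1 ↔ (liftHom α β g hk x).right = 1
    rw [rightHom_liftHom]
  · rw [mem_fibre_iff]
    show ((tEl F α)⁻¹ * liftHom α β g hk (tEl F α)).right = 1
    rw [liftHom_t, TT]
    have h1 : (tEl F α)⁻¹ * (tEl F α * inl g) = inl g := by group
    rw [h1, right_inl]

lemma res_mulAutOf (hk : ∀ f, β (α f) = α (g * β f * g⁻¹)) :
    res α ⟨mulAutOf α β g hk, mulAutOf_mem α β g hk⟩ = β := by
  ext x
  refine inl_injective (φ := zpowersHom (MulAut F) α) ?_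
  rw [← res_apply α ⟨mulAutOf α β g hk, mulAutOf_mem α β g hk⟩ x]
  show liftHom α β g hk (inl x) = inl (β x)
  rw [liftHom_inl]

end build

lemma mulAut_mul_conj (e : MulAut F) (a : F) :
    e * MulAut.conj a = MulAut.conj (e a) * e := by
  ext x
  simp [MulAut.mul_apply, MulAut.conj_apply, map_mul, map_inv]

lemma res_eq_one_imp (hc : Subgroup.center F = ⊥) (ψ : autFO F α) (h : res α ψ = 1) :
    (ψ : MulAut (Suspension F α)) = 1 := by
  have hg : g0 α ψ = 1 := by
    have hcen : g0 α ψ ∈ Subgroup.center F := by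
      rw [Subgroup.mem_center_iff]
      intro f
      have hk := key α ψ f
      rw [h] at hk
      simp only [MulAut.one_apply] at hk
      have := α.injective hk
      calc f * g0 α ψ = (g0 α ψ * f * (g0 α ψ)⁻¹) * g0 α ψ := by rw [← this]
      _ = g0 α ψ * f := by group
    rw [hc] at hcen
    exact Subgroup.mem_bot.mp hcen
  have ht : (ψ : MulAut (Suspension F α)) (tEl F α) = tEl F α := by
    rw [phi_t, hg]
    simp
  have hl : ∀ f : F, (ψ : MulAut (Suspension F α)) (inl f) = inl f := fun f => by
    rw [res_apply, h]
    simp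
  refine MulEquiv.ext fun x => ?_
  show (ψ : MulAut (Suspension F α)) x = x
  conv_rhs => rw [← inl_left_mul_inr_right x]
  conv_lhs => rw [← inl_left_mul_inr_right x]
  rw [map_mul, hl]
  congr 1
  have hx : (inr x.right : Suspension F α) = tEl F α ^ (Multiplicative.toAdd x.right) := by
    rw [tEl, ← map_zpow]
    congr 1
    rw [← ofAdd_zsmul, smul_eq_mul, mul_one, ofAdd_toAdd]
  rw [hx, map_zpow, ht]

end Stmt7Aux

open Stmt7Aux

/-- Let `Γ = F ⋊_α ⟨t⟩` be the suspension of `α ∈ Aut(F)`, where `F` has trivial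
center.  Then `Out_fo(Γ)`, the group of fibre and orientation preserving
automorphisms of `Γ` modulo inner automorphisms of `Γ`, is isomorphic to
`Z_{Out(F)}([α]) / ⟨[α]⟩`, the centralizer of `[α]` in `Out(F)` modulo the
cyclic subgroup generated by `[α]`. -/
theorem stmt7 {F : Type*} [Group F] (hc : Subgroup.center F = ⊥) (α : MulAut F) :
    Nonempty
      ((autFO F α ⧸ (innAut (Suspension F α)).subgroupOf (autFO F α)) ≃*
        (Subgroup.centralizer
            ({((α : MulAut F) : MulAut F ⧸ innAut F)} : Set (MulAut F ⧸ innAut F)) ⧸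
          zpowersInCentralizer F α)) := by
  let Φ : autFO F α →* _ :=
    (QuotientGroup.mk' (zpowersInCentralizer F α)).comp (theta α)
  have hsurj : Function.Surjective Φ := by
    intro q
    obtain ⟨c, rfl⟩ := QuotientGroup.mk'_surjective _ q
    obtain ⟨β, hβ⟩ := QuotientGroup.mk'_surjective (innAut F) (c : MulAut F ⧸ innAut F)
    have hc2 := Subgroup.mem_centralizer_iff.mp c.2 _ (Set.mem_singleton _)
    have hcomm : ((α * β : MulAut F) : MulAut F ⧸ innAut F) =
        ((β * α : MulAut F) : MulAut F ⧸ innAut F) := by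
      rw [QuotientGroup.mk_mul, QuotientGroup.mk_mul]
      have hb : ((β : MulAut F) : MulAut F ⧸ innAut F) = (c : MulAut F ⧸ innAut F) := hβ
      rw [hb, hc2]
    have hmem : (α * β)⁻¹ * (β * α) ∈ innAut F := QuotientGroup.eq.mp hcomm
    obtain ⟨h, hh⟩ := hmem
    have hk : ∀ f, β (α f) = α (β h * β f * (β h)⁻¹) := by
      intro f
      have h1 : MulAut.conj h f = β⁻¹ (α⁻¹ (β (α f))) := by
        rw [hh]
        simp [MulAut.mul_apply, mul_inv_rev]
      have h2 : α (β (MulAut.conj h f)) = β (α f) := by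
        rw [h1]
        simp only [MulAut.inv_def, MulEquiv.apply_symm_apply]
      rw [← h2, MulAut.conj_apply]
      simp only [map_mul, map_inv]
    refine ⟨⟨mulAutOf α β (β h) hk, mulAutOf_mem α β (β h) hk⟩, ?_⟩
    have hth : theta α ⟨mulAutOf α β (β h) hk, mulAutOf_mem α β (β h) hk⟩ = c :=
      Subtype.ext (by rw [theta_coe, res_mulAutOf]; exact hβ)
    show (QuotientGroup.mk' _) (theta α _) = _
    rw [hth]
  have hker : Φ.ker = (innAut (Suspension F α)).subgroupOf (autFO F α) := by
    ext φ
    have hiff : φ ∈ Φ.ker ↔ ((res α φ : MulAut F) : MulAut F ⧸ innAut F) ∈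
        Subgroup.zpowers ((α : MulAut F) : MulAut F ⧸ innAut F) := by
      rw [MonoidHom.mem_ker]
      show (QuotientGroup.mk' _) (theta α φ) = 1 ↔ _
      rw [← MonoidHom.mem_ker, QuotientGroup.ker_mk']
      rw [zpowersInCentralizer, Subgroup.mem_subgroupOf]
      exact Iff.rfl
    rw [hiff, Subgroup.mem_subgroupOf]
    constructor
    · intro hz
      obtain ⟨n, hn⟩ := Subgroup.mem_zpowers_iff.mp hz
      rw [← QuotientGroup.mk_zpow] at hn
      have hmem2 : ((α ^ n : MulAut F))⁻¹ * res α φ ∈ innAut F := QuotientGroup.eq.mp hn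
      obtain ⟨f₁, hf⟩ := hmem2
      have hres : res α φ = α ^ n * MulAut.conj f₁ := by
        rw [hf]
        group
      set γ : Suspension F α := ⟨(α ^ n) f₁, Multiplicative.ofAdd n⟩ with hγdef
      have hconj : res α ⟨MulAut.conj γ, conj_mem_autFO α γ⟩ = res α φ := by
        rw [res_of_coe_eq_conj α _ γ rfl]
        show MulAut.conj ((α ^ n) f₁) * α ^ (Multiplicative.toAdd (Multiplicative.ofAdd n)) = _
        rw [toAdd_ofAdd, hres, mulAut_mul_conj]
      set cγ : autFO F α := ⟨MulAut.conj γ, conj_mem_autFO α γ⟩ with hcγdef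
      have hψ : res α (φ * cγ⁻¹) = 1 := by
        have hsplit : res α (φ * cγ⁻¹) = res α φ * (res α cγ)⁻¹ := by
          show resM α (φ * cγ⁻¹) = _
          rw [map_mul, map_inv]
          rfl
        rw [hsplit, hconj]
        group
      have hone := res_eq_one_imp α hc (φ * cγ⁻¹) hψ
      have hfin : (φ : MulAut (Suspension F α)) = MulAut.conj γ := by
        have hcoe : ((φ * cγ⁻¹ : autFO F α) : MulAut (Suspension F α)) =
            (φ : MulAut (Suspension F α)) * (cγ : MulAut (Suspension F α))⁻¹ := rfl
        rw [hcoe] at hone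
        exact mul_inv_eq_one.mp hone
      exact ⟨γ, hfin.symm⟩
    · rintro ⟨γ, hγ⟩
      rw [res_of_coe_eq_conj α φ γ hγ.symm]
      have h1 : ((MulAut.conj γ.left : MulAut F) : MulAut F ⧸ innAut F) = 1 :=
        (QuotientGroup.eq_one_iff _).mpr ⟨γ.left, rfl⟩
      rw [QuotientGroup.mk_mul, h1, one_mul, QuotientGroup.mk_zpow]
      exact zpow_mem (Subgroup.mem_zpowers _) _
  exact ⟨(QuotientGroup.quotientMulEquivOfEq hker.symm).trans
    (QuotientGroup.quotientKerEquivOfSurjective Φ hsurj)⟩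
end

section
/- The kernel of the reduction map GL_n(ℤ) → GL_n(ℤ/3ℤ) is torsion-free: if A ∈ GL_n(ℤ) satisfies A ≡ I (mod 3) and A^m = I for some m ≥ 1, then A = I. -/
open Matrix Finset

private lemma entry_dvd_mul {n : ℕ} {a b : ℤ} {M P : Matrix (Fin n) (Fin n) ℤ}
    (hM : ∀ i j, a ∣ M i j) (hP : ∀ i j, b ∣ P i j) (i j : Fin n) :
    a * b ∣ (M * P) i j := by
  rw [Matrix.mul_apply]
  exact Finset.dvd_sum fun x _ => mul_dvd_mul (hM i x) (hP x j)

private lemma entry_dvd_pow {n : ℕ} {a : ℤ} {M : Matrix (Fin n) (Fin n) ℤ}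
    (hM : ∀ i j, a ∣ M i j) : ∀ l i j, a ∣ (M ^ (l + 1)) i j := by
  intro l
  induction l with
  | zero => simpa using hM
  | succ l ih =>
    intro i j
    rw [pow_succ, Matrix.mul_apply]
    exact Finset.dvd_sum fun x _ => Dvd.dvd.mul_right (ih i x) _

private lemma entry_dvd_pow_two {n : ℕ} {a : ℤ} {M : Matrix (Fin n) (Fin n) ℤ}
    (hM : ∀ i j, a ∣ M i j) (l : ℕ) (i j : Fin n) : a * a ∣ (M ^ (l + 2)) i j := by
  have h : M ^ (l + 2) = M * M ^ (l + 1) := by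
    rw [← pow_succ']
  rw [h]
  exact entry_dvd_mul hM (entry_dvd_pow hM l) i j

private lemma entry_mul_natCast {n : ℕ} (M : Matrix (Fin n) (Fin n) ℤ) (c : ℕ)
    (i j : Fin n) : (M * ((c : ℕ) : Matrix (Fin n) (Fin n) ℤ)) i j = M i j * c := by
  rw [← Matrix.diagonal_natCast, Matrix.mul_diagonal]

private lemma key {n : ℕ} {p : ℕ} (hp : p.Prime) {N : Matrix (Fin n) (Fin n) ℤ}
    (hN : ∀ i j, (3:ℤ) ∣ N i j) (hpow : (1 + N) ^ p = 1) : N = 0 := by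
  classical
  by_contra hne
  obtain ⟨i0, j0, h0⟩ : ∃ i j, N i j ≠ 0 := by
    by_contra h; push_neg at h
    exact hne (by ext i j; simp [h])
  have hex : ∃ K, ¬ ∀ i j, (3:ℤ) ^ K ∣ N i j := by
    refine ⟨(N i0 j0).natAbs, fun h => ?_⟩
    have h1 : (3:ℤ) ^ (N i0 j0).natAbs ≤ |N i0 j0| :=
      Int.le_of_dvd (abs_pos.mpr h0) ((dvd_abs _ _).mpr (h i0 j0))
    have h2 : ((N i0 j0).natAbs : ℤ) < 3 ^ (N i0 j0).natAbs := by
      exact_mod_cast (Nat.lt_pow_self (by norm_num : 1 < 3) : (N i0 j0).natAbs < 3 ^ (N i0 j0).natAbs)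
    rw [Int.abs_eq_natAbs] at h1
    omega
  have hP0 : ∀ i j, (3:ℤ) ^ 0 ∣ N i j := fun i j => by simp
  have hP1 : ∀ i j, (3:ℤ) ^ 1 ∣ N i j := fun i j => by simpa using hN i j
  have hK2 : 2 ≤ Nat.find hex := by
    rcases Nat.lt_or_ge (Nat.find hex) 2 with h | h
    · interval_cases h' : Nat.find hex
      · exact absurd hP0 (h' ▸ Nat.find_spec hex)
      · exact absurd hP1 (h' ▸ Nat.find_spec hex)
    · exact h
  set k := Nat.find hex - 1 with hkdef
  have hk1 : 1 ≤ k := by omega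
  have hPk : ∀ i j, (3:ℤ) ^ k ∣ N i j :=
    not_not.mp (Nat.find_min hex (by omega))
  have hnPk1 : ¬ ∀ i j, (3:ℤ) ^ (k + 1) ∣ N i j := by
    have : k + 1 = Nat.find hex := by omega
    exact this ▸ Nat.find_spec hex
  -- binomial expansion
  have h2p := hp.two_le
  have hsum : ∑ j ∈ range (p + 1),
      N ^ j * ((p.choose j : ℕ) : Matrix (Fin n) (Fin n) ℤ) = 1 := by
    have h := (Commute.one_right N).add_pow p
    simp only [one_pow, mul_one] at h
    rw [← h, add_comm N 1, hpow]
  set f : ℕ → Matrix (Fin n) (Fin n) ℤ :=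
    fun j => N ^ j * ((p.choose j : ℕ) : Matrix (Fin n) (Fin n) ℤ) with hf
  set S : Matrix (Fin n) (Fin n) ℤ := ∑ j ∈ range (p - 1), f (j + 2) with hS
  have hpeel : S + f 1 + f 0 = 1 := by
    rw [← hsum, Finset.sum_range_succ' f p]
    congr 1
    have : p = (p - 2) + 1 + 1 := by omega
    rw [this, Finset.sum_range_succ' (fun j => f (j + 1)) ((p-2)+1)]
    congr 1
    · apply Finset.sum_congr
      · congr 1; omega
      · intro x _; rfl
  have hf0 : f 0 = 1 := by simp [hf]
  have hf1 : f 1 = N * ((p : ℕ) : Matrix (Fin n) (Fin n) ℤ) := by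
    simp [hf]
  have hNp : N * ((p : ℕ) : Matrix (Fin n) (Fin n) ℤ) = -S := by
    rw [hf0, hf1] at hpeel
    linear_combination (norm := abel) hpeel
  -- divisibility of entries of S
  have hSdvd : ∀ i j, (3:ℤ) ^ k * (3:ℤ) ^ k ∣ S i j ∧
      (p = 3 → (3:ℤ) ^ k * (3:ℤ) ^ k * 3 ∣ S i j) := by
    intro i j
    constructor
    · rw [hS, Matrix.sum_apply]
      refine Finset.dvd_sum fun x _ => ?_
      simp only [hf, entry_mul_natCast]
      exact Dvd.dvd.mul_right (entry_dvd_pow_two hPk x i j) _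
    · intro hp3
      rw [hS, Matrix.sum_apply]
      refine Finset.dvd_sum fun x hx => ?_
      simp only [hf, entry_mul_natCast]
      subst hp3
      simp only [Finset.mem_range] at hx
      interval_cases x
      · -- term N^2 * choose 3 2 = N^2 * 3
        have : (Nat.choose 3 2 : ℤ) = 3 := by norm_num
        rw [this]
        exact mul_dvd_mul (entry_dvd_pow_two hPk 0 i j) dvd_rfl
      · -- term N^3 * choose 3 3
        refine Dvd.dvd.mul_right ?_ _
        have h3 : (3:ℤ)^k * (3:ℤ)^k * 3 ∣ (3:ℤ)^k * (3:ℤ)^k * (3:ℤ)^k := by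
          refine mul_dvd_mul_left _ ?_
          exact dvd_pow_self 3 (by omega)
        refine h3.trans ?_
        have hNk : ∀ i j, (3:ℤ)^k * (3:ℤ)^k ∣ (N ^ 2) i j := fun i j => by
          have := entry_dvd_pow_two hPk 0 i j
          simpa using this
        have h32 : N ^ 3 = N ^ 2 * N := by rw [pow_succ]
        rw [h32]
        exact entry_dvd_mul hNk hPk i j
  -- derive contradiction
  apply hnPk1
  intro i j
  have hent : N i j * (p : ℤ) = - S i j := by
    have := congrFun (congrFun hNp i) j
    rw [entry_mul_natCast] at this
    simpa using this
  by_cases hp3 : p = 3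
  · -- 3^(2k+1) ∣ N i j * 3, so 3^(2k) ∣ N i j
    subst hp3
    have hent' : N i j * 3 = - S i j := by exact_mod_cast hent
    have hdvd : (3:ℤ) ^ k * 3 ^ k * 3 ∣ N i j * 3 := by
      rw [hent']; exact ((hSdvd i j).2 rfl).neg_right
    have hdvd' : (3:ℤ) ^ k * 3 ^ k ∣ N i j :=
      (mul_dvd_mul_iff_right (by norm_num : (3:ℤ) ≠ 0)).mp hdvd
    rw [← pow_add] at hdvd'
    exact (pow_dvd_pow (3:ℤ) (by omega)).trans hdvd'
  · -- p coprime to 3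
    have hdvd : (3:ℤ) ^ k * 3 ^ k ∣ N i j * p := by
      rw [hent]; exact ((hSdvd i j).1).neg_right
    have hcop : IsCoprime ((3:ℤ) ^ k * 3 ^ k) (p : ℤ) := by
      have h3p : IsCoprime (3 : ℤ) (p : ℤ) := by
        rw [Int.isCoprime_iff_gcd_eq_one]
        have := (Nat.coprime_primes (by norm_num) hp).mpr (fun h => hp3 h.symm)
        simpa [Int.gcd] using this
      rw [← pow_add]
      exact h3p.pow_left
    have hdvd' : (3:ℤ) ^ k * 3 ^ k ∣ N i j := hcop.dvd_of_dvd_mul_right hdvd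
    rw [← pow_add] at hdvd'
    exact (pow_dvd_pow (3:ℤ) (by omega)).trans hdvd'

/-- Minkowski's theorem: the kernel of the reduction map
`GL_n(ℤ) → GL_n(ℤ/3ℤ)` is torsion-free.  If `A ∈ GL_n(ℤ)` satisfies
`A ≡ I (mod 3)` and `A ^ m = I` for some `m ≥ 1`, then `A = I`. -/
theorem stmt14 (n : ℕ) (A : Matrix.GeneralLinearGroup (Fin n) ℤ)
    (h3 : Matrix.GeneralLinearGroup.map (Int.castRingHom (ZMod 3)) A = 1)
    (m : ℕ) (hm : 1 ≤ m) (hA : A ^ m = 1) :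
    A = 1 := by
  induction m using Nat.strong_induction_on generalizing A with
  | _ m ih =>
    rcases eq_or_lt_of_le hm with h1 | h2
    · rw [← h1, pow_one] at hA; exact hA
    · -- m ≥ 2
      set p := m.minFac with hpdef
      have hp : p.Prime := Nat.minFac_prime (by omega)
      have hdvd : p ∣ m := Nat.minFac_dvd m
      set B := A ^ (m / p) with hB
      have hBp : B ^ p = 1 := by
        rw [hB, ← pow_mul, Nat.div_mul_cancel hdvd, hA]
      have hBmap : Matrix.GeneralLinearGroup.map (Int.castRingHom (ZMod 3)) B = 1 := by
        rw [hB, map_pow, h3, one_pow]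
      -- congruence: entries of B - 1 divisible by 3
      have hBc : ∀ i j, (3:ℤ) ∣ ((B : Matrix (Fin n) (Fin n) ℤ) - 1) i j := by
        intro i j
        have h' : ((B i j : ℤ) : ZMod 3) = (1 : Matrix (Fin n) (Fin n) (ZMod 3)) i j := by
          have := Matrix.GeneralLinearGroup.map_apply (Int.castRingHom (ZMod 3)) i j B
          rw [hBmap] at this
          simpa using this.symm
        have h1 : (1 : Matrix (Fin n) (Fin n) (ZMod 3)) i j
            = (((1 : Matrix (Fin n) (Fin n) ℤ) i j : ℤ) : ZMod 3) := by
          by_cases hij : i = j <;> simp [Matrix.one_apply, hij]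
        rw [h1] at h'
        have : (((B i j : ℤ) - (1 : Matrix (Fin n) (Fin n) ℤ) i j : ℤ) : ZMod 3) = 0 := by
          push_cast
          rw [h']
          ring
        have := (ZMod.intCast_zmod_eq_zero_iff_dvd _ 3).mp this
        simpa using this
      have hBone : B = 1 := by
        have hpow1 : (1 + ((B : Matrix (Fin n) (Fin n) ℤ) - 1)) ^ p = 1 := by
          rw [add_sub_cancel]
          have := congrArg Units.val hBp
          rw [Units.val_pow_eq_pow_val] at this
          simpa using this
        have := key hp hBc hpow1
        apply Units.ext
        have : (B : Matrix (Fin n) (Fin n) ℤ) = 1 := by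
          have h := sub_eq_zero.mp this
          simpa using h
        simpa using this
      have hmp1 : 1 ≤ m / p := Nat.one_le_div_iff hp.pos |>.mpr (Nat.minFac_le (by omega))
      have hmplt : m / p < m := Nat.div_lt_self (by omega) hp.one_lt
      exact ih (m / p) hmplt A h3 hmp1 hBone
end
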